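/- (Verification of Theorem 3.) Let φ : [0,T] → ℝ be differentiable with e^{φ(t)²/2} N(φ(t)) = e^{r(T−t)}/2 for all t ∈ [0,T], set Σ(t,u) := φ(t)² − φ(u)² for 0 ≤ t ≤ u ≤ T, and define b(t) := K/(2·N(φ(t))). Then for every t ∈ [0,T): K − b(t) = V^e(t, b(t)) + r·K ∫_t^T e^{−r(u−t)} · N( (log(b(u)/b(t)) − r(u−t) + Σ(t,u)/2) / √(Σ(t,u)) ) du, where V^e(t,x) = K·e^{−r(T−t)}·N( (log(K/x) − r(T−t) + Σ(t,T)/2) / √(Σ(t,T)) ) − x·N( (log(K/x) − r(T−t) − Σ(t,T)/2) / √(Σ(t,T)) ) for x > 0. -/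

import Mathlib

open MeasureTheory Real Set Filter

/-- Standard normal cdf `N(x)`. -/
noncomputable def stdCdf (x : ℝ) : ℝ := ∫ y in Set.Iic x, Real.exp (-y ^ 2 / 2) / Real.sqrt (2 * Real.pi)

lemma gauss_eq (y : ℝ) : Real.exp (-y ^ 2 / 2) / Real.sqrt (2 * Real.pi)
    = (Real.sqrt (2*Real.pi))⁻¹ * Real.exp (-(1/2) * y^2) := by
  rw [div_eq_inv_mul]; ring_nf

lemma gauss_integrable : Integrable (fun y : ℝ => Real.exp (-y ^ 2 / 2) / Real.sqrt (2 * Real.pi)) := by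
  simp_rw [gauss_eq]
  exact (integrable_exp_neg_mul_sq (by norm_num)).const_mul _

lemma gauss_total : ∫ y : ℝ, Real.exp (-y ^ 2 / 2) / Real.sqrt (2 * Real.pi) = 1 := by
  simp_rw [gauss_eq]
  rw [integral_const_mul, integral_gaussian]
  rw [inv_mul_eq_div, div_eq_one_iff_eq (by positivity)]
  rw [show Real.pi / (1/2:ℝ) = 2 * Real.pi by ring]

lemma stdCdf_add_neg (x : ℝ) : stdCdf x + stdCdf (-x) = 1 := by
  have h1 : stdCdf (-x) = ∫ y in Set.Ioi x, Real.exp (-y ^ 2 / 2) / Real.sqrt (2 * Real.pi) := by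
    rw [stdCdf, ← integral_comp_neg_Ioi]
    congr 1; ext y; rw [neg_pow]; ring_nf
  rw [stdCdf, h1, intervalIntegral.integral_Iic_add_Ioi gauss_integrable.integrableOn gauss_integrable.integrableOn,
    gauss_total]

lemma stdCdf_pos (x : ℝ) : 0 < stdCdf x := by
  rw [stdCdf]
  rw [setIntegral_pos_iff_support_of_nonneg_ae]
  · have : (Function.support fun y : ℝ => Real.exp (-y ^ 2 / 2) / Real.sqrt (2 * Real.pi)) = Set.univ := by
      ext y; simp [Function.mem_support]; positivity
    rw [this, Set.univ_inter]
    simp [Real.volume_Iic]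
  · filter_upwards with y; positivity
  · exact gauss_integrable.integrableOn

lemma stdCdf_zero : stdCdf 0 = 1/2 := by
  have := stdCdf_add_neg 0
  rw [neg_zero] at this; linarith

lemma stdCdf_lt_one (x : ℝ) : stdCdf x < 1 := by
  have := stdCdf_add_neg x
  have := stdCdf_pos (-x)
  linarith

lemma neg_mul_gauss_integrable : Integrable (fun y : ℝ => (-y) * Real.exp (-y ^ 2 / 2)) := by
  have := (integrable_mul_exp_neg_mul_sq (b := 1/2) (by norm_num)).neg
  apply this.congr
  filter_upwards with y
  simp only [Pi.neg_apply]
  ring_nf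

lemma hasDerivAt_stdCdf (x : ℝ) :
    HasDerivAt stdCdf (Real.exp (-x ^ 2 / 2) / Real.sqrt (2 * Real.pi)) x := by
  have key : ∀ u : ℝ, stdCdf u = stdCdf 0 + ∫ y in (0:ℝ)..u, Real.exp (-y ^ 2 / 2) / Real.sqrt (2 * Real.pi) := by
    intro u
    rw [← intervalIntegral.integral_Iic_sub_Iic gauss_integrable.integrableOn gauss_integrable.integrableOn]
    rw [stdCdf, stdCdf]; ring
  have hc : Continuous (fun y : ℝ => Real.exp (-y ^ 2 / 2) / Real.sqrt (2 * Real.pi)) := by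
    continuity
  have h := intervalIntegral.integral_hasDerivAt_right
    (gauss_integrable.intervalIntegrable (a := 0) (b := x))
    hc.stronglyMeasurable.stronglyMeasurableAtFilter hc.continuousAt
  have h2 := (hasDerivAt_const x (stdCdf 0)).add h
  rw [zero_add] at h2
  exact h2.congr_of_eventuallyEq (Filter.Eventually.of_forall key)

lemma exp_int_Iic (x : ℝ) : ∫ y in Set.Iic x, (-y) * Real.exp (-y ^ 2 / 2)
    = Real.exp (-x ^ 2 / 2) := by
  have h : ∫ y in Set.Iic x, (-y) * Real.exp (-y ^ 2 / 2)
      = Real.exp (-x ^ 2 / 2) - 0 := by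
    apply integral_Iic_of_hasDerivAt_of_tendsto
      (f := fun y => Real.exp (-y ^ 2 / 2))
    · exact (Real.continuous_exp.comp (by continuity)).continuousWithinAt
    · intro y _
      have h1 : HasDerivAt (fun y : ℝ => -y ^ 2 / 2) (-y) y := by
        have := ((hasDerivAt_pow 2 y).neg).div_const 2
        refine this.congr_deriv ?_
        push_cast; ring
      have h2 := (Real.hasDerivAt_exp (-y^2/2)).comp y h1
      refine h2.congr_deriv ?_
      ring
    · exact neg_mul_gauss_integrable.integrableOn
    · have hyy : Tendsto (fun y : ℝ => y ^ 2) atBot atTop := by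
        have h := (tendsto_pow_atTop (α := ℝ) (n := 2) two_ne_zero).comp tendsto_neg_atBot_atTop
        exact h.congr fun y => by simp [neg_sq]
      have h3 : Tendsto (fun y : ℝ => -y ^ 2 / 2) atBot atBot :=
        (tendsto_neg_atTop_atBot.comp hyy).atBot_div_const (by norm_num)
      exact Real.tendsto_exp_atBot.comp h3
  simpa using h

lemma mill (x : ℝ) (hx : x < 0) :
    stdCdf x < Real.exp (-x ^ 2 / 2) / ((-x) * Real.sqrt (2 * Real.pi)) := by
  have hxpos : 0 < -x := by linarith
  have hs : (0:ℝ) < Real.sqrt (2 * Real.pi) := Real.sqrt_pos.2 (by positivity)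
  set c : ℝ := ((-x) * Real.sqrt (2 * Real.pi))⁻¹ with hc
  have hcpos : 0 < c := by positivity
  have hgint : Integrable (fun y : ℝ => (-y) * Real.exp (-y ^ 2 / 2) * c) :=
    neg_mul_gauss_integrable.mul_const c
  have hgval : ∫ y in Set.Iic x, (-y) * Real.exp (-y ^ 2 / 2) * c
      = Real.exp (-x ^ 2 / 2) * c := by
    rw [MeasureTheory.integral_mul_const, exp_int_Iic]
  have hle : ∀ y : ℝ, y ≤ x → Real.exp (-y ^ 2 / 2) / Real.sqrt (2 * Real.pi)
      ≤ (-y) * Real.exp (-y ^ 2 / 2) * c := by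
    intro y hy
    have h1 : (1:ℝ)/Real.sqrt (2 * Real.pi) ≤ (-y) * c := by
      have hco : (-y) * c = (-y)/((-x) * Real.sqrt (2 * Real.pi)) := by rw [hc]; ring
      rw [hco, div_le_div_iff₀ (by positivity) (by positivity)]
      nlinarith [mul_le_mul_of_nonneg_right (show -x ≤ -y by linarith) hs.le]
    have he : (0:ℝ) < Real.exp (-y ^ 2 / 2) := Real.exp_pos _
    calc Real.exp (-y ^ 2 / 2) / Real.sqrt (2 * Real.pi)
        = Real.exp (-y ^ 2 / 2) * (1 / Real.sqrt (2 * Real.pi)) := by ring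
      _ ≤ Real.exp (-y ^ 2 / 2) * ((-y) * c) := mul_le_mul_of_nonneg_left h1 he.le
      _ = (-y) * Real.exp (-y ^ 2 / 2) * c := by ring
  have hlt : ∀ y : ℝ, y < x → Real.exp (-y ^ 2 / 2) / Real.sqrt (2 * Real.pi)
      < (-y) * Real.exp (-y ^ 2 / 2) * c := by
    intro y hy
    have h1 : (1:ℝ)/Real.sqrt (2 * Real.pi) < (-y) * c := by
      have hco : (-y) * c = (-y)/((-x) * Real.sqrt (2 * Real.pi)) := by rw [hc]; ring
      rw [hco, div_lt_div_iff₀ (by positivity) (by positivity)]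
      nlinarith [mul_lt_mul_of_pos_right (show -x < -y by linarith) hs]
    have he : (0:ℝ) < Real.exp (-y ^ 2 / 2) := Real.exp_pos _
    calc Real.exp (-y ^ 2 / 2) / Real.sqrt (2 * Real.pi)
        = Real.exp (-y ^ 2 / 2) * (1 / Real.sqrt (2 * Real.pi)) := by ring
      _ < Real.exp (-y ^ 2 / 2) * ((-y) * c) := by
          exact (mul_lt_mul_iff_right₀ he).2 h1
      _ = (-y) * Real.exp (-y ^ 2 / 2) * c := by ring
  have hdiffpos : 0 < ∫ y in Set.Iic x,
      ((-y) * Real.exp (-y ^ 2 / 2) * c - Real.exp (-y ^ 2 / 2) / Real.sqrt (2 * Real.pi)) := by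
    refine (setIntegral_pos_iff_support_of_nonneg_ae ?_ ?_).2 ?_
    · filter_upwards [ae_restrict_mem measurableSet_Iic] with y hy
      have := hle y hy
      simp only [Pi.zero_apply]
      linarith
    · exact (hgint.sub gauss_integrable).integrableOn
    · have hsub : Set.Iio x ⊆ (Function.support fun y : ℝ =>
          (-y) * Real.exp (-y ^ 2 / 2) * c - Real.exp (-y ^ 2 / 2) / Real.sqrt (2 * Real.pi)) := by
        intro y hy
        have := hlt y hy
        simp only [Function.mem_support]
        intro habs
        rw [sub_eq_zero] at habs
        rw [habs] at this
        exact lt_irrefl _ this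
      have hsub2 : Set.Iio x ⊆ (Function.support fun y : ℝ =>
          (-y) * Real.exp (-y ^ 2 / 2) * c - Real.exp (-y ^ 2 / 2) / Real.sqrt (2 * Real.pi)) ∩ Set.Iic x :=
        fun y hy => ⟨hsub hy, le_of_lt (Set.mem_Iio.mp hy)⟩
      refine lt_of_lt_of_le ?_ (measure_mono hsub2)
      rw [Real.volume_Iio]
      exact ENNReal.zero_lt_top
  rw [integral_sub hgint.integrableOn (gauss_integrable.integrableOn (s := Set.Iic x)), hgval] at hdiffpos
  have hfin : stdCdf x < Real.exp (-x ^ 2 / 2) * c := by rw [stdCdf]; linarith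
  rw [div_eq_mul_inv]
  exact hfin

lemma gfun_strictMono : StrictMono (fun x : ℝ => Real.exp (x ^ 2 / 2) * stdCdf x) := by
  apply strictMono_of_hasDerivAt_pos
    (f' := fun x => x * Real.exp (x ^ 2 / 2) * stdCdf x
      + Real.exp (x ^ 2 / 2) * (Real.exp (-x ^ 2 / 2) / Real.sqrt (2 * Real.pi)))
  · intro x
    have h1 : HasDerivAt (fun x : ℝ => x ^ 2 / 2) x x := by
      have := (hasDerivAt_pow 2 x).div_const 2
      refine this.congr_deriv ?_
      push_cast; ring
    have h2 : HasDerivAt (fun x : ℝ => Real.exp (x ^ 2 / 2)) (x * Real.exp (x ^ 2 / 2)) x := by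
      have := (Real.hasDerivAt_exp (x ^ 2 / 2)).comp x h1
      refine this.congr_deriv ?_
      ring
    exact h2.mul (hasDerivAt_stdCdf x)
  · intro x
    have hs : (0:ℝ) < Real.sqrt (2 * Real.pi) := Real.sqrt_pos.2 (by positivity)
    have he : (0:ℝ) < Real.exp (x ^ 2 / 2) := Real.exp_pos _
    have hn : (0:ℝ) < Real.exp (-x ^ 2 / 2) / Real.sqrt (2 * Real.pi) := by positivity
    rcases le_or_gt 0 x with hx | hx
    · have : 0 ≤ x * Real.exp (x ^ 2 / 2) * stdCdf x := by
        have := stdCdf_pos x; positivity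
      nlinarith
    · have hm := mill x hx
      have hxpos : 0 < -x := by linarith
      rw [lt_div_iff₀ (by positivity)] at hm
      -- stdCdf x * (-x * √(2π)) < exp(-x²/2)
      have key : (-x) * stdCdf x < Real.exp (-x ^ 2 / 2) / Real.sqrt (2 * Real.pi) := by
        rw [lt_div_iff₀ hs]
        nlinarith
      have : 0 < x * stdCdf x + Real.exp (-x ^ 2 / 2) / Real.sqrt (2 * Real.pi) := by linarith
      calc (0:ℝ) < Real.exp (x ^ 2 / 2) * (x * stdCdf x + Real.exp (-x ^ 2 / 2) / Real.sqrt (2 * Real.pi)) := by positivity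
        _ = x * Real.exp (x ^ 2 / 2) * stdCdf x + Real.exp (x ^ 2 / 2) * (Real.exp (-x ^ 2 / 2) / Real.sqrt (2 * Real.pi)) := by ring

theorem boundary_solves_integral_equation_vol (r T K : ℝ)
    (hr : 0 < r) (hT : 0 < T) (hK : 0 < K)
    (φ : ℝ → ℝ) (hdiff : DifferentiableOn ℝ φ (Set.Icc 0 T))
    (heq : ∀ t ∈ Set.Icc 0 T,
      Real.exp ((φ t) ^ 2 / 2) * stdCdf (φ t) = Real.exp (r * (T - t)) / 2)
    -- `Sig(t,u) = φ(t)² − φ(u)²` and `b(t) = K/(2·N(φ(t)))`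
    (Sig : ℝ → ℝ → ℝ) (hSig : ∀ t u, Sig t u = (φ t) ^ 2 - (φ u) ^ 2)
    (b : ℝ → ℝ) (hb : ∀ t, b t = K / (2 * stdCdf (φ t)))
    (Ve : ℝ → ℝ → ℝ)
    (hVe : ∀ t x, Ve t x
      = K * Real.exp (-r * (T - t)) *
          stdCdf ((Real.log (K / x) - r * (T - t) + Sig t T / 2) / Real.sqrt (Sig t T))
        - x * stdCdf ((Real.log (K / x) - r * (T - t) - Sig t T / 2) / Real.sqrt (Sig t T))) :
    ∀ t, 0 ≤ t → t < T →
      K - b t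
        = Ve t (b t)
          + r * K * ∫ u in t..T, Real.exp (-r * (u - t)) *
              stdCdf ((Real.log (b u / b t) - r * (u - t) + Sig t u / 2) / Real.sqrt (Sig t u)) := by
  intro t ht htT
  have htmem : t ∈ Set.Icc 0 T := ⟨ht, htT.le⟩
  -- φ T = 0
  have hg0 : Real.exp ((0:ℝ) ^ 2 / 2) * stdCdf 0 = 1/2 := by
    simp [stdCdf_zero]
  have hφT : φ T = 0 := by
    have h1 := heq T ⟨hT.le, le_rfl⟩
    simp only [sub_self, mul_zero, Real.exp_zero] at h1
    exact gfun_strictMono.injective (by rw [h1, hg0])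
  -- φ t > 0
  have hφt : 0 < φ t := by
    have h1 := heq t htmem
    have h2 : (1:ℝ)/2 < Real.exp (r * (T - t)) / 2 := by
      have : (1:ℝ) < Real.exp (r * (T - t)) := by
        rw [show (1:ℝ) = Real.exp 0 by simp]
        exact Real.exp_lt_exp.2 (by nlinarith)
      linarith
    have := gfun_strictMono.lt_iff_lt (a := 0) (b := φ t)
    rw [← this]
    rw [hg0, h1]
    exact h2
  -- b formula
  have hbval : ∀ u, u ∈ Set.Icc 0 T → b u = K * Real.exp ((φ u) ^ 2 / 2 - r * (T - u)) := by
    intro u hu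
    have h1 := heq u hu
    have hpos := stdCdf_pos (φ u)
    have hstd : stdCdf (φ u) = Real.exp (r * (T - u)) / (2 * Real.exp ((φ u) ^ 2 / 2)) := by
      field_simp at h1 ⊢
      linarith [h1]
    rw [hb, hstd, Real.exp_sub]
    have he1 : Real.exp ((φ u) ^ 2 / 2) ≠ 0 := Real.exp_ne_zero _
    have he2 : Real.exp (r * (T - u)) ≠ 0 := Real.exp_ne_zero _
    field_simp
  have hbt := hbval t htmem
  have hbtpos : 0 < b t := by rw [hbt]; positivity
  -- the integrand simplifies
  have hinteq : Set.EqOn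
      (fun u => Real.exp (-r * (u - t)) *
        stdCdf ((Real.log (b u / b t) - r * (u - t) + Sig t u / 2) / Real.sqrt (Sig t u)))
      (fun u => Real.exp (-r * (u - t)) * (1/2)) (Set.uIcc t T) := by
    intro u hu
    rw [Set.uIcc_of_le htT.le] at hu
    have humem : u ∈ Set.Icc 0 T := ⟨le_trans ht hu.1, hu.2⟩
    have hbu := hbval u humem
    have hlog : Real.log (b u / b t) = ((φ u) ^ 2 / 2 - r * (T - u)) - ((φ t) ^ 2 / 2 - r * (T - t)) := by
      rw [hbu, hbt, mul_div_mul_left _ _ (ne_of_gt hK), ← Real.exp_sub, Real.log_exp]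
    have hnum : Real.log (b u / b t) - r * (u - t) + Sig t u / 2 = 0 := by
      rw [hlog, hSig]; ring
    simp only [hnum, zero_div, stdCdf_zero]
  have hint : (∫ u in t..T, Real.exp (-r * (u - t)) *
        stdCdf ((Real.log (b u / b t) - r * (u - t) + Sig t u / 2) / Real.sqrt (Sig t u)))
      = (1 - Real.exp (-r * (T - t))) / r / 2 := by
    rw [intervalIntegral.integral_congr hinteq]
    have hF : ∀ u ∈ Set.uIcc t T, HasDerivAt (fun u => -(Real.exp (-r * (u - t))) / r * (1/2))
        (Real.exp (-r * (u - t)) * (1/2)) u := by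
      intro u _
      have h1 : HasDerivAt (fun u : ℝ => -r * (u - t)) (-r) u := by
        have := ((hasDerivAt_id u).sub_const t).const_mul (-r)
        simpa using this
      have h2 := (Real.hasDerivAt_exp (-r * (u - t))).comp u h1
      have h3 := ((h2.neg).div_const r).mul_const (1/2 : ℝ)
      refine h3.congr_deriv ?_
      field_simp
    have hcont : IntervalIntegrable (fun u => Real.exp (-r * (u - t)) * (1/2)) volume t T := by
      apply Continuous.intervalIntegrable
      continuity
    rw [intervalIntegral.integral_eq_sub_of_hasDerivAt hF hcont]
    simp only [sub_self, mul_zero, neg_zero, Real.exp_zero]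
    field_simp
    ring
  -- compute Ve t (b t)
  have hφne : φ t ≠ 0 := ne_of_gt hφt
  have hSigtT : Sig t T = (φ t) ^ 2 := by rw [hSig, hφT]; ring
  have hsqrt : Real.sqrt (Sig t T) = φ t := by rw [hSigtT, Real.sqrt_sq hφt.le]
  have hKne : K ≠ 0 := ne_of_gt hK
  have hlogK : Real.log (K / b t) = r * (T - t) - (φ t) ^ 2 / 2 := by
    rw [hbt, show K / (K * Real.exp ((φ t) ^ 2 / 2 - r * (T - t)))
        = Real.exp (-((φ t) ^ 2 / 2 - r * (T - t))) by rw [Real.exp_neg]; field_simp,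
      Real.log_exp]
    ring
  have harg1 : (Real.log (K / b t) - r * (T - t) + Sig t T / 2) / Real.sqrt (Sig t T) = 0 := by
    rw [hlogK, hSigtT]
    rw [show r * (T - t) - φ t ^ 2 / 2 - r * (T - t) + φ t ^ 2 / 2 = 0 by ring, zero_div]
  have harg2 : (Real.log (K / b t) - r * (T - t) - Sig t T / 2) / Real.sqrt (Sig t T) = -φ t := by
    rw [hlogK, hsqrt, hSigtT, div_eq_iff hφne]
    ring
  have hVet : Ve t (b t) = K * Real.exp (-r * (T - t)) * (1/2) - b t * (1 - stdCdf (φ t)) := by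
    rw [hVe, harg1, harg2, stdCdf_zero]
    have := stdCdf_add_neg (φ t)
    have hneg : stdCdf (-φ t) = 1 - stdCdf (φ t) := by linarith
    rw [hneg]
  have hbtN : b t * stdCdf (φ t) = K / 2 := by
    rw [hb]
    have := stdCdf_pos (φ t)
    field_simp
  rw [hVet, hint]
  have hrne : r ≠ 0 := ne_of_gt hr
  field_simp
  nlinarith [hbtN]
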